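/- arXiv:1509.08387 — 3 statements merged into one kernel-verified Lean document; each statement's English description precedes it below -/
import Mathlib

section
/- For a deterministic quantile search with parameter m ≥ 2 and ρ = (m-1)/m, starting with a uniform prior on θ ∈ [0,1], the expected estimation error after n measurements is E[|θ̂_n − θ|] = (1/4)·[ρ² + (1−ρ)²]^n. -/
open MeasureTheory

/-- One step of deterministic quantile search (DQS) with parameter `m` on the step
function with change point `θ`.  The state is `(a, b, d)` where `[a,b]` is the feasible
interval and `d` is the last (noiseless) measurement (`true` = label 1, move forward). -/
noncomputable def dqsStep (m θ : ℝ) : ℝ × ℝ × Bool → ℝ × ℝ × Bool :=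
  fun s =>
    let a := s.1
    let b := s.2.1
    let d := s.2.2
    let X := if d then a + (b - a) / m else b - (b - a) / m
    if X < θ then (X, b, true) else (a, X, false)

/-- State of DQS after `n` measurements, starting from feasible interval `[0,1]`
with initial (virtual) measurement `1` at `0`. -/
noncomputable def dqsState (m θ : ℝ) (n : ℕ) : ℝ × ℝ × Bool :=
  (dqsStep m θ)^[n] (0, 1, true)

/-- DQS estimate after `n` measurements: midpoint of the feasible interval. -/
noncomputable def dqsEst (m θ : ℝ) (n : ℕ) : ℝ :=
  ((dqsState m θ n).1 + (dqsState m θ n).2.1) / 2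

/-! ### Auxiliary development -/

/-- DQS state from a general starting state. -/
noncomputable def dqsS (m θ : ℝ) (s : ℝ × ℝ × Bool) (n : ℕ) : ℝ × ℝ × Bool :=
  (dqsStep m θ)^[n] s

/-- DQS estimate from a general starting state. -/
noncomputable def dqsE (m θ : ℝ) (s : ℝ × ℝ × Bool) (n : ℕ) : ℝ :=
  ((dqsS m θ s n).1 + (dqsS m θ s n).2.1) / 2

lemma dqsStep_eq' (m θ : ℝ) (s : ℝ × ℝ × Bool) :
    dqsStep m θ s =
      if (if s.2.2 then s.1 + (s.2.1 - s.1) / m else s.2.1 - (s.2.1 - s.1) / m) < θ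
      then ((if s.2.2 then s.1 + (s.2.1 - s.1) / m else s.2.1 - (s.2.1 - s.1) / m), s.2.1, true)
      else (s.1, (if s.2.2 then s.1 + (s.2.1 - s.1) / m else s.2.1 - (s.2.1 - s.1) / m), false) :=
  rfl

lemma dqsS_succ (m θ : ℝ) (s : ℝ × ℝ × Bool) (n : ℕ) :
    dqsS m θ s (n + 1) = dqsStep m θ (dqsS m θ s n) := by
  rw [dqsS, dqsS, Function.iterate_succ_apply']

lemma dqsE_succ (m θ : ℝ) (s : ℝ × ℝ × Bool) (n : ℕ) :
    dqsE m θ s (n + 1) = dqsE m θ (dqsStep m θ s) n := by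
  simp only [dqsE, dqsS, Function.iterate_succ_apply]

lemma dqsStep_affine (m c L θ : ℝ) (hL : 0 < L) (a b : ℝ) (d : Bool) :
    dqsStep m (c + L * θ) (c + L * a, c + L * b, d) =
      (c + L * (dqsStep m θ (a, b, d)).1, c + L * (dqsStep m θ (a, b, d)).2.1,
        (dqsStep m θ (a, b, d)).2.2) := by
  have hX : (if d then (c + L * a) + ((c + L * b) - (c + L * a)) / m
      else (c + L * b) - ((c + L * b) - (c + L * a)) / m)
      = c + L * (if d then a + (b - a) / m else b - (b - a) / m) := by
    cases d <;> simp <;> ring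
  rw [dqsStep_eq' m (c + L * θ), dqsStep_eq' m θ]
  simp only
  rw [hX]
  by_cases h : (if d then a + (b - a) / m else b - (b - a) / m) < θ
  · rw [if_pos ((add_lt_add_iff_left c).2 ((mul_lt_mul_iff_right₀ hL).2 h)), if_pos h]
  · rw [if_neg (fun hc => h ((mul_lt_mul_iff_right₀ hL).1 ((add_lt_add_iff_left c).1 hc))), if_neg h]

lemma dqsS_affine (m c L θ : ℝ) (hL : 0 < L) (a b : ℝ) (d : Bool) (n : ℕ) :
    dqsS m (c + L * θ) (c + L * a, c + L * b, d) n =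
      (c + L * (dqsS m θ (a, b, d) n).1, c + L * (dqsS m θ (a, b, d) n).2.1,
        (dqsS m θ (a, b, d) n).2.2) := by
  induction n with
  | zero => rfl
  | succ n ih =>
    rw [dqsS_succ, ih, dqsS_succ]
    exact dqsStep_affine m c L θ hL _ _ _

lemma dqsE_affine (m c L θ : ℝ) (hL : 0 < L) (a b : ℝ) (d : Bool) (n : ℕ) :
    dqsE m (c + L * θ) (c + L * a, c + L * b, d) n = c + L * dqsE m θ (a, b, d) n := by
  rw [dqsE, dqsE, dqsS_affine m c L θ hL a b d n]
  ring

lemma measurable_dqsS (m : ℝ) (s : ℝ × ℝ × Bool) (n : ℕ) :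
    Measurable fun θ => dqsS m θ s n := by
  induction n with
  | zero => exact measurable_const
  | succ n ih =>
    have hA : Measurable fun θ => (dqsS m θ s n).1 := measurable_fst.comp ih
    have hB : Measurable fun θ => (dqsS m θ s n).2.1 :=
      measurable_fst.comp (measurable_snd.comp ih)
    have hD : Measurable fun θ => (dqsS m θ s n).2.2 :=
      measurable_snd.comp (measurable_snd.comp ih)
    have hX : Measurable fun θ =>
        (if (dqsS m θ s n).2.2 then (dqsS m θ s n).1 + ((dqsS m θ s n).2.1 - (dqsS m θ s n).1) / m
         else (dqsS m θ s n).2.1 - ((dqsS m θ s n).2.1 - (dqsS m θ s n).1) / m) := by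
      apply Measurable.ite (hD (measurableSet_singleton true))
      · exact hA.add ((hB.sub hA).div_const m)
      · exact hB.sub ((hB.sub hA).div_const m)
    have heq : (fun θ => dqsS m θ s (n + 1)) = fun θ => dqsStep m θ (dqsS m θ s n) := by
      funext θ; exact dqsS_succ m θ s n
    rw [heq]
    simp only [dqsStep_eq']
    apply Measurable.ite (measurableSet_lt hX measurable_id)
    · exact hX.prodMk (hB.prodMk measurable_const)
    · exact hA.prodMk (hX.prodMk measurable_const)

lemma dqsStep_mem (m : ℝ) (hm : 2 ≤ m) (θ a b : ℝ) (d : Bool)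
    (h0 : 0 ≤ a) (hab : a ≤ b) (hb : b ≤ 1) :
    0 ≤ (dqsStep m θ (a, b, d)).1 ∧ (dqsStep m θ (a, b, d)).1 ≤ (dqsStep m θ (a, b, d)).2.1 ∧
      (dqsStep m θ (a, b, d)).2.1 ≤ 1 := by
  have hd : 0 ≤ (b - a) / m := div_nonneg (by linarith) (by linarith)
  have hd2 : (b - a) / m ≤ b - a := div_le_self (by linarith) (by linarith)
  rw [dqsStep_eq']
  simp only
  cases d <;> simp only [Bool.false_eq_true, if_false, if_true] <;> split_ifs <;>
    refine ⟨by simp only; linarith, by simp only; linarith, by simp only; linarith⟩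

lemma dqsS_mem (m : ℝ) (hm : 2 ≤ m) {s : ℝ × ℝ × Bool}
    (h0 : 0 ≤ s.1) (hab : s.1 ≤ s.2.1) (hb : s.2.1 ≤ 1) (θ : ℝ) (n : ℕ) :
    0 ≤ (dqsS m θ s n).1 ∧ (dqsS m θ s n).1 ≤ (dqsS m θ s n).2.1 ∧ (dqsS m θ s n).2.1 ≤ 1 := by
  induction n with
  | zero => exact ⟨h0, hab, hb⟩
  | succ n ih =>
    rw [dqsS_succ]
    exact dqsStep_mem m hm θ _ _ _ ih.1 ih.2.1 ih.2.2

lemma dqs_integrable (m : ℝ) (hm : 2 ≤ m) (s : ℝ × ℝ × Bool)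
    (h0 : 0 ≤ s.1) (hab : s.1 ≤ s.2.1) (hb : s.2.1 ≤ 1) (n : ℕ) (a b : ℝ) :
    IntervalIntegrable (fun θ => |dqsE m θ s n - θ|) volume a b := by
  have h := measurable_dqsS m s n
  have hmeas : Measurable fun θ => |dqsE m θ s n - θ| := by
    have hE : Measurable fun θ => dqsE m θ s n :=
      ((measurable_fst.comp h).add (measurable_fst.comp (measurable_snd.comp h))).div_const 2
    exact (hE.sub measurable_id).abs
  apply IntervalIntegrable.mono_fun' (g := fun θ => 1 + |θ|)
  · exact (continuous_const.add continuous_abs).intervalIntegrable a b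
  · exact hmeas.aestronglyMeasurable
  · refine Filter.Eventually.of_forall fun θ => ?_
    have hmem := dqsS_mem m hm h0 hab hb θ n
    have hE1 : 0 ≤ dqsE m θ s n := by rw [dqsE]; linarith [hmem.1, hmem.2.1]
    have hE2 : dqsE m θ s n ≤ 1 := by rw [dqsE]; linarith [hmem.2.1, hmem.2.2]
    have h3 : |dqsE m θ s n - θ| ≤ |dqsE m θ s n| + |θ| := abs_sub _ _
    have h4 : |dqsE m θ s n| ≤ 1 := by rw [abs_of_nonneg hE1]; exact hE2
    simp only [Real.norm_eq_abs, abs_abs]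
    linarith

lemma dqs_base_int : ∫ θ in (0:ℝ)..1, |1 / 2 - θ| = 1 / 4 := by
  have hc : Continuous fun θ : ℝ => |1 / 2 - θ| := (continuous_const.sub continuous_id).abs
  have h1 : ∫ θ in (0:ℝ)..(1 / 2), |1 / 2 - θ| = ∫ θ in (0:ℝ)..(1 / 2), (1 / 2 - θ) := by
    apply intervalIntegral.integral_congr
    intro θ hθ
    rw [Set.uIcc_of_le (by norm_num)] at hθ
    show |1 / 2 - θ| = 1 / 2 - θ
    exact abs_of_nonneg (by linarith [hθ.2])
  have h2 : ∫ θ in (1 / 2 : ℝ)..1, |1 / 2 - θ| = ∫ θ in (1 / 2 : ℝ)..1, (θ - 1 / 2) := by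
    apply intervalIntegral.integral_congr
    intro θ hθ
    rw [Set.uIcc_of_le (by norm_num)] at hθ
    show |1 / 2 - θ| = θ - 1 / 2
    rw [abs_sub_comm]
    exact abs_of_nonneg (by linarith [hθ.1])
  rw [← intervalIntegral.integral_add_adjacent_intervals (a := 0) (b := 1 / 2) (c := 1)
    (hc.intervalIntegrable _ _) (hc.intervalIntegrable _ _), h1, h2]
  rw [intervalIntegral.integral_sub intervalIntegrable_const
      intervalIntegral.intervalIntegrable_id,
    intervalIntegral.integral_sub intervalIntegral.intervalIntegrable_id
      intervalIntegrable_const]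
  simp only [integral_id, intervalIntegral.integral_const, smul_eq_mul]
  norm_num

lemma dqs_split_step (m : ℝ) (hm : 2 ≤ m) (n : ℕ) (d : Bool) (X : ℝ)
    (hX0 : 0 < X) (hX1 : X < 1)
    (hlow : ∀ θ ∈ Set.Ioc (0:ℝ) X, dqsStep m θ ((0:ℝ), (1:ℝ), d) = (0, X, false))
    (hhigh : ∀ θ ∈ Set.Ioc X (1:ℝ), dqsStep m θ ((0:ℝ), (1:ℝ), d) = (X, 1, true)) :
    ∫ θ in (0:ℝ)..1, |dqsE m θ (0, 1, d) (n + 1) - θ| =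
      X ^ 2 * (∫ θ in (0:ℝ)..1, |dqsE m θ (0, 1, false) n - θ|) +
      (1 - X) ^ 2 * ∫ θ in (0:ℝ)..1, |dqsE m θ (0, 1, true) n - θ| := by
  have hs0 : (0:ℝ) ≤ ((0:ℝ), (1:ℝ), d).1 := le_refl 0
  have hs1 : ((0:ℝ), (1:ℝ), d).1 ≤ ((0:ℝ), (1:ℝ), d).2.1 := by norm_num
  have hs2 : ((0:ℝ), (1:ℝ), d).2.1 ≤ 1 := le_refl 1
  have hi1 : IntervalIntegrable (fun θ => |dqsE m θ (0, 1, d) (n + 1) - θ|) volume 0 X :=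
    dqs_integrable m hm _ hs0 hs1 hs2 _ _ _
  have hi2 : IntervalIntegrable (fun θ => |dqsE m θ (0, 1, d) (n + 1) - θ|) volume X 1 :=
    dqs_integrable m hm _ hs0 hs1 hs2 _ _ _
  rw [← intervalIntegral.integral_add_adjacent_intervals hi1 hi2]
  have hA : ∫ θ in (0:ℝ)..X, |dqsE m θ (0, 1, d) (n + 1) - θ| =
      ∫ θ in (0:ℝ)..X, |dqsE m θ (0, X, false) n - θ| := by
    rw [intervalIntegral.integral_of_le hX0.le, intervalIntegral.integral_of_le hX0.le]
    apply setIntegral_congr_fun measurableSet_Ioc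
    intro θ hθ
    show |dqsE m θ (0, 1, d) (n + 1) - θ| = |dqsE m θ (0, X, false) n - θ|
    rw [dqsE_succ, hlow θ hθ]
  have hB : ∫ θ in (X:ℝ)..1, |dqsE m θ (0, 1, d) (n + 1) - θ| =
      ∫ θ in (X:ℝ)..1, |dqsE m θ (X, 1, true) n - θ| := by
    rw [intervalIntegral.integral_of_le hX1.le, intervalIntegral.integral_of_le hX1.le]
    apply setIntegral_congr_fun measurableSet_Ioc
    intro θ hθ
    show |dqsE m θ (0, 1, d) (n + 1) - θ| = |dqsE m θ (X, 1, true) n - θ|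
    rw [dqsE_succ, hhigh θ hθ]
  have hAsub : ∫ θ in (0:ℝ)..X, |dqsE m θ (0, X, false) n - θ| =
      X ^ 2 * (∫ θ in (0:ℝ)..1, |dqsE m θ (0, 1, false) n - θ|) := by
    have h := intervalIntegral.integral_comp_mul_add (a := 0) (b := 1)
      (fun θ => |dqsE m θ (0, X, false) n - θ|) (ne_of_gt hX0) 0
    simp only [mul_zero, add_zero, zero_add, mul_one, smul_eq_mul] at h
    have hpt : ∀ x : ℝ, |dqsE m (X * x) (0, X, false) n - X * x| =
        X * |dqsE m x (0, 1, false) n - x| := by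
      intro x
      have haff := dqsE_affine m 0 X x hX0 0 1 false n
      simp only [mul_zero, add_zero, mul_one, zero_add] at haff
      rw [haff, ← mul_sub, abs_mul, abs_of_pos hX0]
    simp only [hpt] at h
    rw [intervalIntegral.integral_const_mul] at h
    have hXne : X ≠ 0 := ne_of_gt hX0
    field_simp at h
    rw [← h]
  have hBsub : ∫ θ in (X:ℝ)..1, |dqsE m θ (X, 1, true) n - θ| =
      (1 - X) ^ 2 * (∫ θ in (0:ℝ)..1, |dqsE m θ (0, 1, true) n - θ|) := by
    have hL : (0:ℝ) < 1 - X := by linarith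
    have h := intervalIntegral.integral_comp_mul_add (a := 0) (b := 1)
      (fun θ => |dqsE m θ (X, 1, true) n - θ|) (ne_of_gt hL) X
    simp only [mul_zero, zero_add, mul_one] at h
    have hone : 1 - X + X = 1 := by ring
    rw [hone] at h
    have hpt : ∀ x : ℝ, |dqsE m ((1 - X) * x + X) (X, 1, true) n - ((1 - X) * x + X)| =
        (1 - X) * |dqsE m x (0, 1, true) n - x| := by
      intro x
      have haff := dqsE_affine m X (1 - X) x hL 0 1 true n
      simp only [mul_zero, add_zero, mul_one] at haff
      rw [show X + (1 - X) = 1 by ring] at haff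
      have harg : (1 - X) * x + X = X + (1 - X) * x := by ring
      rw [harg, haff,
        show X + (1 - X) * dqsE m x (0, 1, true) n - (X + (1 - X) * x)
          = (1 - X) * (dqsE m x (0, 1, true) n - x) by ring,
        abs_mul, abs_of_pos hL]
    simp only [hpt] at h
    rw [intervalIntegral.integral_const_mul] at h
    have hLne : (1:ℝ) - X ≠ 0 := ne_of_gt hL
    field_simp at h
    rw [smul_eq_mul, one_div, eq_inv_mul_iff_mul_eq₀ hLne] at h
    rw [← h]
    ring
  rw [hA, hB, hAsub, hBsub]

lemma dqs_key (m : ℝ) (hm : 2 ≤ m) (n : ℕ) : ∀ d : Bool,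
    ∫ θ in (0:ℝ)..1, |dqsE m θ (0, 1, d) n - θ| =
      1 / 4 * (((m - 1) / m) ^ 2 + (1 / m) ^ 2) ^ n := by
  have hm0 : 0 < m := by linarith
  have hmne : m ≠ 0 := ne_of_gt hm0
  induction n with
  | zero =>
    intro d
    have hpt : ∀ θ : ℝ, |dqsE m θ (0, 1, d) 0 - θ| = |1 / 2 - θ| := by
      intro θ
      have : dqsE m θ (0, 1, d) 0 = 1 / 2 := by
        rw [dqsE]; norm_num [dqsS]
      rw [this]
    simp only [hpt, pow_zero, mul_one]
    exact dqs_base_int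
  | succ n ih =>
    intro d
    have hinvm0 : (0:ℝ) < 1 / m := by positivity
    have hinvm1 : (1:ℝ) / m < 1 := by
      rw [div_lt_one hm0]; linarith
    have hrho : (1:ℝ) - 1 / m = (m - 1) / m := by field_simp
    cases d with
    | true =>
      have hlow : ∀ θ ∈ Set.Ioc (0:ℝ) (1 / m),
          dqsStep m θ ((0:ℝ), (1:ℝ), true) = (0, 1 / m, false) := by
        intro θ hθ
        rw [dqsStep_eq']
        simp only [if_true]
        rw [if_neg]
        · norm_num
        · norm_num
          have h2 := hθ.2
          rw [one_div] at h2
          linarith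
      have hhigh : ∀ θ ∈ Set.Ioc (1 / m : ℝ) 1,
          dqsStep m θ ((0:ℝ), (1:ℝ), true) = (1 / m, 1, true) := by
        intro θ hθ
        rw [dqsStep_eq']
        simp only [if_true]
        rw [if_pos]
        · norm_num
        · norm_num
          have h1 := hθ.1
          rw [one_div] at h1
          linarith
      rw [dqs_split_step m hm n true (1 / m) hinvm0 hinvm1 hlow hhigh, ih true, ih false, hrho]
      ring
    | false =>
      have hX0 : (0:ℝ) < (m - 1) / m := by
        apply div_pos <;> linarith
      have hX1 : (m - 1) / m < 1 := by
        rw [div_lt_one hm0]; linarith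
      have hlow : ∀ θ ∈ Set.Ioc (0:ℝ) ((m - 1) / m),
          dqsStep m θ ((0:ℝ), (1:ℝ), false) = (0, (m - 1) / m, false) := by
        intro θ hθ
        rw [dqsStep_eq']
        simp only [Bool.false_eq_true, if_false]
        rw [if_neg]
        · rw [show (1:ℝ) - (1 - 0) / m = (m - 1) / m by field_simp; ring]
        · rw [show (1:ℝ) - (1 - 0) / m = (m - 1) / m by field_simp; ring]
          exact not_lt.2 hθ.2
      have hhigh : ∀ θ ∈ Set.Ioc ((m - 1) / m : ℝ) 1,
          dqsStep m θ ((0:ℝ), (1:ℝ), false) = ((m - 1) / m, 1, true) := by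
        intro θ hθ
        rw [dqsStep_eq']
        simp only [Bool.false_eq_true, if_false]
        rw [if_pos]
        · rw [show (1:ℝ) - (1 - 0) / m = (m - 1) / m by field_simp; ring]
        · rw [show (1:ℝ) - (1 - 0) / m = (m - 1) / m by field_simp; ring]
          exact hθ.1
      have hone : (1:ℝ) - (m - 1) / m = 1 / m := by field_simp; ring
      rw [dqs_split_step m hm n false ((m - 1) / m) hX0 hX1 hlow hhigh, ih true, ih false, hone]
      ring

/-- For DQS with parameter `m ≥ 2` and `ρ = (m-1)/m`, with a uniform prior on
`θ ∈ [0,1]`, the expected estimation error after `n` measurements is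
`(1/4)·[ρ² + (1−ρ)²]^n`. -/
theorem dqs_expected_error (m : ℝ) (hm : 2 ≤ m) (n : ℕ) :
    ∫ θ in Set.Ioo (0:ℝ) 1, |dqsEst m θ n - θ| =
      (1/4) * (((m-1)/m)^2 + (1 - (m-1)/m)^2)^n := by
  have hm0 : 0 < m := by linarith
  have hone : (1:ℝ) - (m - 1) / m = 1 / m := by field_simp; ring
  rw [hone, ← integral_Ioc_eq_integral_Ioo,
    ← intervalIntegral.integral_of_le (by norm_num : (0:ℝ) ≤ 1)]
  exact dqs_key m hm n true
end

section
/- In deterministic quantile search with parameter m, after n noiseless measurements the width of the feasible interval containing θ equals a product of n factors, each of which is either ρ = (m-1)/m or 1−ρ = 1/m, so the estimation error satisfies |θ̂_n − θ| ≤ (1/2)·ρ^n for all θ. -/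
lemma dqs_inv (m θ : ℝ) (hm : 2 ≤ m) (hθ0 : 0 ≤ θ) (hθ1 : θ ≤ 1) (n : ℕ) :
    ∃ c : Fin n → ℝ, (∀ i, c i = (m-1)/m ∨ c i = 1 - (m-1)/m) ∧
      (dqsState m θ n).2.1 - (dqsState m θ n).1 = ∏ i, c i ∧
      (dqsState m θ n).1 ≤ θ ∧ θ ≤ (dqsState m θ n).2.1 := by
  have hm0 : (0:ℝ) < m := lt_of_lt_of_le two_pos hm
  have hm0' : m ≠ 0 := ne_of_gt hm0
  induction n with
  | zero =>
      exact ⟨fun i => i.elim0, fun i => i.elim0, by simp [dqsState], by simp [dqsState, hθ0],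
        by simp [dqsState, hθ1]⟩
  | succ n ih =>
      obtain ⟨c, hc, hw, ha, hb⟩ := ih
      have hstate : dqsState m θ (n+1) = dqsStep m θ (dqsState m θ n) := by
        rw [dqsState, dqsState, Function.iterate_succ_apply']
      set s := dqsState m θ n with hs
      clear_value s
      obtain ⟨a, b, d⟩ := s
      simp only at hw ha hb
      cases d with
      | true =>
          by_cases hX : a + (b - a) / m < θ
          · have hs : dqsState m θ (n+1) = (a + (b - a) / m, b, true) := by
              rw [hstate]; simp [dqsStep, hX]
            refine ⟨Fin.cons ((m-1)/m) c, ?_, ?_, ?_, ?_⟩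
            · intro i
              refine Fin.cases (Or.inl rfl) (fun j => hc j) i
            · rw [hs, Fin.prod_cons, ← hw]
              show b - (a + (b - a) / m) = (m-1)/m * (b - a)
              field_simp; ring
            · rw [hs]; exact le_of_lt hX
            · rw [hs]; exact hb
          · have hs : dqsState m θ (n+1) = (a, a + (b - a) / m, false) := by
              rw [hstate]; simp [dqsStep, hX]
            refine ⟨Fin.cons (1 - (m-1)/m) c, ?_, ?_, ?_, ?_⟩
            · intro i
              refine Fin.cases (Or.inr rfl) (fun j => hc j) i
            · rw [hs, Fin.prod_cons, ← hw]
              show a + (b - a) / m - a = (1 - (m-1)/m) * (b - a)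
              field_simp; ring
            · rw [hs]; exact ha
            · rw [hs]; exact le_of_not_gt hX
      | false =>
          by_cases hX : b - (b - a) / m < θ
          · have hs : dqsState m θ (n+1) = (b - (b - a) / m, b, true) := by
              rw [hstate]; simp [dqsStep, hX]
            refine ⟨Fin.cons (1 - (m-1)/m) c, ?_, ?_, ?_, ?_⟩
            · intro i
              refine Fin.cases (Or.inr rfl) (fun j => hc j) i
            · rw [hs, Fin.prod_cons, ← hw]
              show b - (b - (b - a) / m) = (1 - (m-1)/m) * (b - a)
              field_simp; ring
            · rw [hs]; exact le_of_lt hX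
            · rw [hs]; exact hb
          · have hs : dqsState m θ (n+1) = (a, b - (b - a) / m, false) := by
              rw [hstate]; simp [dqsStep, hX]
            refine ⟨Fin.cons ((m-1)/m) c, ?_, ?_, ?_, ?_⟩
            · intro i
              refine Fin.cases (Or.inl rfl) (fun j => hc j) i
            · rw [hs, Fin.prod_cons, ← hw]
              show b - (b - a) / m - a = (m-1)/m * (b - a)
              field_simp; ring
            · rw [hs]; exact ha
            · rw [hs]; exact le_of_not_gt hX

/-- After `n` noiseless DQS measurements the feasible-interval width is a product of
`n` factors, each equal to `ρ = (m-1)/m` or `1 − ρ = 1/m`, hence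
`|θ̂_n − θ| ≤ (1/2)·ρ^n` for all `θ ∈ [0,1]`. -/
theorem dqs_width_product_and_error_bound (m θ : ℝ) (hm : 2 ≤ m)
    (hθ : θ ∈ Set.Icc (0:ℝ) 1) (n : ℕ) :
    (∃ c : Fin n → ℝ, (∀ i, c i = (m-1)/m ∨ c i = 1 - (m-1)/m) ∧
      (dqsState m θ n).2.1 - (dqsState m θ n).1 = ∏ i, c i) ∧
    |dqsEst m θ n - θ| ≤ (1/2) * ((m-1)/m)^n := by
  have hm0 : (0:ℝ) < m := lt_of_lt_of_le two_pos hm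
  obtain ⟨c, hc, hw, ha, hb⟩ := dqs_inv m θ hm hθ.1 hθ.2 n
  refine ⟨⟨c, hc, hw⟩, ?_⟩
  have hρ0 : (0:ℝ) ≤ (m-1)/m := div_nonneg (by linarith) hm0.le
  have h1m : 1 - (m-1)/m = 1/m := by field_simp; ring
  have hprod : ∏ i, c i ≤ ((m-1)/m)^n := by
    calc ∏ i, c i ≤ ∏ _i : Fin n, (m-1)/m := ?_
      _ = ((m-1)/m)^n := by rw [Finset.prod_const, Finset.card_univ, Fintype.card_fin]
    refine Finset.prod_le_prod ?_ ?_
    · intro i _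
      rcases hc i with h | h <;> rw [h]
      · exact hρ0
      · rw [h1m]; positivity
    · intro i _
      rcases hc i with h | h <;> rw [h]
      · rw [h1m]
        exact (div_le_div_iff_of_pos_right hm0).mpr (by linarith)
  have hwb : (dqsState m θ n).2.1 - (dqsState m θ n).1 ≤ ((m-1)/m)^n := hw ▸ hprod
  rw [dqsEst, abs_le]
  constructor <;> linarith [hwb, ha, hb]
end

section
/- Let D₁ be the distance traveled by deterministic quantile search with parameter m before first passing the change point θ (uniform on [0,1]). Then E[D₁] = m/(2m−1). -/
open MeasureTheory

/-- The distance traveled by DQS with parameter `m` before first passing the change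
point `θ`: the first forward sample location `1 - ρ^{i+1}` (with `ρ = (m-1)/m`)
strictly beyond `θ`. -/
noncomputable def dqsFirstPassDist (m θ : ℝ) : ℝ :=
  sInf {x : ℝ | ∃ i : ℕ, x = 1 - ((m-1)/m)^(i+1) ∧ θ < x}

section Aux

lemma rho_pos {m : ℝ} (hm : 2 ≤ m) : 0 < (m-1)/m := by
  apply div_pos <;> linarith

lemma rho_lt_one {m : ℝ} (hm : 2 ≤ m) : (m-1)/m < 1 := by
  rw [div_lt_one (by linarith)]; linarith

/-- On the interval `[1-ρ^i, 1-ρ^{i+1})` the function equals `1-ρ^{i+1}`. -/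
lemma dqs_formula {m : ℝ} (hm : 2 ≤ m) (i : ℕ) {θ : ℝ}
    (h1 : 1 - ((m-1)/m)^i ≤ θ) (h2 : θ < 1 - ((m-1)/m)^(i+1)) :
    dqsFirstPassDist m θ = 1 - ((m-1)/m)^(i+1) := by
  set ρ := (m-1)/m with hρ
  have hρ0 : 0 < ρ := rho_pos hm
  have hρ1 : ρ < 1 := rho_lt_one hm
  have hbdd : BddBelow {x : ℝ | ∃ j : ℕ, x = 1 - ρ^(j+1) ∧ θ < x} := by
    refine ⟨0, fun x hx => ?_⟩
    obtain ⟨j, rfl, _⟩ := hx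
    have : ρ^(j+1) ≤ 1 := pow_le_one₀ hρ0.le hρ1.le
    linarith
  have hmem : (1 - ρ^(i+1)) ∈ {x : ℝ | ∃ j : ℕ, x = 1 - ρ^(j+1) ∧ θ < x} := ⟨i, rfl, h2⟩
  apply le_antisymm
  · exact csInf_le hbdd hmem
  · apply le_csInf ⟨_, hmem⟩
    rintro x ⟨j, rfl, hj⟩
    have hij : ρ^(j+1) < ρ^i := by linarith
    have hlt : i < j + 1 := by
      by_contra hle
      push_neg at hle
      exact absurd (pow_le_pow_of_le_one hρ0.le hρ1.le hle) (not_le.mpr hij)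
    have : i + 1 ≤ j + 1 := by omega
    have := pow_le_pow_of_le_one hρ0.le hρ1.le this
    linarith

/-- Every `θ ∈ [0,1)` lies in some interval. -/
lemma dqs_cover {m : ℝ} (hm : 2 ≤ m) {θ : ℝ} (h0 : 0 ≤ θ) (h1 : θ < 1) :
    ∃ i : ℕ, 1 - ((m-1)/m)^i ≤ θ ∧ θ < 1 - ((m-1)/m)^(i+1) := by
  set ρ := (m-1)/m with hρ
  have hρ0 : 0 < ρ := rho_pos hm
  have hρ1 : ρ < 1 := rho_lt_one hm
  have hex : ∃ n : ℕ, ρ^(n+1) < 1 - θ := by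
    obtain ⟨n, hn⟩ := exists_pow_lt_of_lt_one (by linarith : (0:ℝ) < 1 - θ) hρ1
    exact ⟨n, lt_of_le_of_lt (pow_le_pow_of_le_one hρ0.le hρ1.le (Nat.le_succ n)) hn⟩
  classical
  set n := Nat.find hex with hn_def
  have hn : ρ^(n+1) < 1 - θ := Nat.find_spec hex
  refine ⟨n, ?_, by linarith⟩
  rcases Nat.eq_zero_or_pos n with h | h
  · simp [h, h0]
  · have hmin : ¬ ρ^((n-1)+1) < 1-θ := Nat.find_min hex (by omega)
    rw [Nat.sub_add_cancel h, not_lt] at hmin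
    linarith

end Aux

/-- For `θ` uniform on `[0,1]`, the expected distance traveled by DQS with parameter
`m` before first passing `θ` is `m/(2m−1)`. -/
theorem dqs_expected_first_pass_distance (m : ℝ) (hm : 2 ≤ m) :
    ∫ θ in Set.Ioo (0:ℝ) 1, dqsFirstPassDist m θ = m / (2*m - 1) := by
  set ρ := (m-1)/m with hρ
  have hρ0 : 0 < ρ := rho_pos hm
  have hρ1 : ρ < 1 := rho_lt_one hm
  have hm0 : (0:ℝ) < m := by linarith
  set f : ℝ → ℝ := dqsFirstPassDist m with hf
  set A : ℕ → Set ℝ := fun i => Set.Ico (1 - ρ^i) (1 - ρ^(i+1)) with hA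
  -- endpoints monotone, intervals inside [0,1)
  have hpow_le_one : ∀ i : ℕ, ρ^i ≤ 1 := fun i => pow_le_one₀ hρ0.le hρ1.le
  have hpow_pos : ∀ i : ℕ, 0 < ρ^i := fun i => pow_pos hρ0 i
  -- union of the A i is Ico 0 1
  have hUnion : (⋃ i, A i) = Set.Ico (0:ℝ) 1 := by
    ext θ
    simp only [Set.mem_iUnion, hA, Set.mem_Ico]
    constructor
    · rintro ⟨i, hi1, hi2⟩
      have := hpow_le_one i
      have := hpow_pos (i+1)
      constructor <;> linarith
    · rintro ⟨h0, h1⟩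
      exact dqs_cover hm h0 h1
  -- f equals the constant on each piece
  have hconst : ∀ i : ℕ, ∀ θ ∈ A i, f θ = 1 - ρ^(i+1) := by
    intro i θ hθ
    exact dqs_formula hm i hθ.1 hθ.2
  -- monotonicity of f on Ico 0 1
  have hmono : MonotoneOn f (Set.Ico (0:ℝ) 1) := by
    intro x hx y hy hxy
    obtain ⟨i, hi1, hi2⟩ := dqs_cover hm hx.1 hx.2
    obtain ⟨j, hj1, hj2⟩ := dqs_cover hm hy.1 hy.2
    have e1 := hconst i x ⟨hi1, hi2⟩
    have e2 := hconst j y ⟨hj1, hj2⟩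
    rw [e1, e2]
    have hij : ρ^(j+1) < ρ^i := by linarith
    have : i < j + 1 := by
      by_contra hle
      push_neg at hle
      exact absurd (pow_le_pow_of_le_one hρ0.le hρ1.le hle) (not_le.mpr hij)
    have h2 : i + 1 ≤ j + 1 := by omega
    have := pow_le_pow_of_le_one hρ0.le hρ1.le h2
    linarith
  -- integrability on Ico 0 1
  have hInt : IntegrableOn f (Set.Ico (0:ℝ) 1) := by
    have hmeas := (aemeasurable_restrict_of_monotoneOn (μ := volume) measurableSet_Ico hmono).aestronglyMeasurable
    refine Integrable.mono' (g := fun _ => (1:ℝ)) ?_ hmeas ?_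
    · exact integrableOn_const (by simp [Real.volume_Ico])
    · rw [ae_restrict_iff' measurableSet_Ico]
      filter_upwards with θ hθ
      obtain ⟨i, hi1, hi2⟩ := dqs_cover hm hθ.1 hθ.2
      rw [hconst i θ ⟨hi1, hi2⟩]
      have := hpow_le_one (i+1)
      have := hpow_pos (i+1)
      rw [Real.norm_eq_abs, abs_of_nonneg (by linarith)]
      linarith
  -- pairwise disjoint
  have hdisj : Pairwise (Function.onFun Disjoint A) := by
    intro i j hij
    have key : ∀ a b : ℕ, a < b → Disjoint (A a) (A b) := by
      intro a b hab
      rw [Set.Ico_disjoint_Ico]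
      have : ρ^b ≤ ρ^(a+1) := pow_le_pow_of_le_one hρ0.le hρ1.le (by omega)
      exact le_trans (min_le_left _ _) (le_trans (by linarith) (le_max_right _ _))
    rcases Nat.lt_or_ge i j with h | h
    · exact key i j h
    · exact (key j i (lt_of_le_of_ne h (Ne.symm hij))).symm
  -- main computation
  have step1 : ∫ θ in Set.Ioo (0:ℝ) 1, f θ = ∫ θ in ⋃ i, A i, f θ := by
    rw [hUnion]
    exact setIntegral_congr_set Ioo_ae_eq_Ico
  rw [step1]
  rw [integral_iUnion (fun i => measurableSet_Ico) hdisj (hUnion ▸ hInt)]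
  have step2 : ∀ i : ℕ, ∫ θ in A i, f θ = (ρ^i - ρ^(i+1)) * (1 - ρ^(i+1)) := by
    intro i
    rw [setIntegral_congr_fun measurableSet_Ico (fun θ hθ => hconst i θ hθ),
      setIntegral_const, measureReal_def, Real.volume_Ico, smul_eq_mul]
    have h1 : ρ^(i+1) ≤ ρ^i := pow_le_pow_of_le_one hρ0.le hρ1.le (Nat.le_succ i)
    rw [ENNReal.toReal_ofReal (by linarith)]
    ring
  simp only [hA] at step2
  simp_rw [step2]
  -- sum the series
  have hterm : ∀ i : ℕ, (ρ^i - ρ^(i+1)) * (1 - ρ^(i+1)) =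
      (1-ρ) * ρ^i - ((1-ρ)*ρ) * (ρ^2)^i := by
    intro i
    have h2i : (ρ^2)^i = ρ^i * ρ^i := by rw [← pow_mul, two_mul, pow_add]
    rw [h2i, pow_succ]
    ring
  simp_rw [hterm]
  have hρ2 : ρ^2 < 1 := by nlinarith
  have hs1 : Summable (fun i : ℕ => (1-ρ) * ρ^i) :=
    (summable_geometric_of_lt_one hρ0.le hρ1).mul_left _
  have hs2 : Summable (fun i : ℕ => ((1-ρ)*ρ) * (ρ^2)^i) :=
    (summable_geometric_of_lt_one (by positivity) hρ2).mul_left _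
  rw [Summable.tsum_sub hs1 hs2, tsum_mul_left, tsum_mul_left,
    tsum_geometric_of_lt_one hρ0.le hρ1, tsum_geometric_of_lt_one (by positivity) hρ2]
  have h1 : (1:ℝ) - ρ ≠ 0 := by linarith
  have h2 : (1:ℝ) - ρ^2 ≠ 0 := by nlinarith
  have h3 : (2:ℝ)*m - 1 ≠ 0 := by linarith
  have hρm : ρ * m = m - 1 := by rw [hρ]; field_simp
  field_simp
  rw [eq_div_iff (by linarith : m * 2 - 1 ≠ 0)]
  nlinarith [hρm, sq_nonneg ρ, sq_nonneg m]
end
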